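/- Let Γ be a distance-biregular graph. Then c_{0,2i}·c_{0,2i+1} = c_{1,2i}·c_{1,2i+1} and b_{0,2i−1}·b_{0,2i} = b_{1,2i−1}·b_{1,2i} for every integer i with 1 ≤ i ≤ ⌊(D₀ − 1)/2⌋. -/

import Mathlib

open Finset SimpleGraph

set_option linter.unusedSectionVars false

section DBR

variable {V : Type} [Fintype V] [DecidableEq V]

private lemma fin2_trans {a b c : Fin 2} (h1 : a ≠ b) (h2 : b ≠ c) : a = c := by
  have ha := a.isLt; have hb := b.isLt; have hcv := c.isLt
  simp only [Ne, Fin.ext_iff] at h1 h2 ⊢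
  omega

private lemma fin2_ne {a b : Fin 2} (h : a ≠ b) : ∀ t : Fin 2, t ≠ a → t = b := by
  intro t ht
  have ha := a.isLt; have hb := b.isLt; have htv := t.isLt
  simp only [Ne, Fin.ext_iff] at h ht ⊢
  omega

/-- `j`-th vertex of a tuple, clamped. -/
def seqv {n : ℕ} (p : Fin (n+1) → V) (j : ℕ) : V := p ⟨min j n, by omega⟩

lemma seqv_mk {n : ℕ} (p : Fin (n+1) → V) (j : ℕ) (h : j < n+1) : p ⟨j, h⟩ = seqv p j := by
  unfold seqv
  congr 1
  ext
  simp
  omega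

/-- geodesic-sequence predicate -/
def ok (G : SimpleGraph V) [DecidableRel G.Adj] (n : ℕ) (p : Fin (n+1) → V) : Prop :=
  (∀ j : ℕ, j < n → G.Adj (seqv p j) (seqv p (j+1))) ∧
  (∀ j : ℕ, j < n + 1 → G.dist (seqv p 0) (seqv p j) = j)

noncomputable instance okDec (G : SimpleGraph V) [DecidableRel G.Adj] (n : ℕ) (p : Fin (n+1) → V) :
    Decidable (ok G n p) := by
  unfold ok; infer_instance

noncomputable def allG (G : SimpleGraph V) [DecidableRel G.Adj] (n : ℕ) : Finset (Fin (n+1) → V) :=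
  univ.filter (fun p => ok G n p)

noncomputable def GS (G : SimpleGraph V) [DecidableRel G.Adj] (n : ℕ) (x : V) : Finset (Fin (n+1) → V) :=
  (allG G n).filter (fun p => seqv p 0 = x)

noncomputable def GP (G : SimpleGraph V) [DecidableRel G.Adj] (n : ℕ) (x y : V) : Finset (Fin (n+1) → V) :=
  (GS G n x).filter (fun p => seqv p n = y)

lemma mem_allG {G : SimpleGraph V} [DecidableRel G.Adj] {n : ℕ} {p : Fin (n+1) → V} :
    p ∈ allG G n ↔ ok G n p := by simp [allG]

lemma mem_GS {G : SimpleGraph V} [DecidableRel G.Adj] {n : ℕ} {x : V} {p : Fin (n+1) → V} :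
    p ∈ GS G n x ↔ ok G n p ∧ seqv p 0 = x := by simp [GS, allG]

lemma mem_GP {G : SimpleGraph V} [DecidableRel G.Adj] {n : ℕ} {x y : V} {p : Fin (n+1) → V} :
    p ∈ GP G n x y ↔ (ok G n p ∧ seqv p 0 = x) ∧ seqv p n = y := by simp [GP, GS, allG]

lemma chain_le {G : SimpleGraph V} [DecidableRel G.Adj] (hconn : G.Connected) {n : ℕ}
    {p : Fin (n+1) → V}
    (hadj : ∀ j : ℕ, j < n → G.Adj (seqv p j) (seqv p (j+1))) :
    ∀ a b : ℕ, a ≤ b → b ≤ n → G.dist (seqv p a) (seqv p b) ≤ b - a := by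
  intro a b
  induction b with
  | zero =>
    intro hab _
    have : a = 0 := by omega
    subst this
    simp [SimpleGraph.dist_self]
  | succ b ih =>
    intro hab hb
    by_cases hab' : a = b + 1
    · subst hab'; simp [SimpleGraph.dist_self]
    · have hab2 : a ≤ b := by omega
      have h1 := ih hab2 (by omega)
      have h2 : G.dist (seqv p b) (seqv p (b+1)) ≤ 1 := by
        have := SimpleGraph.dist_le (hadj b (by omega)).toWalk
        simpa using this
      have h3 := hconn.dist_triangle (u := seqv p a) (v := seqv p b) (w := seqv p (b+1))
      omega

lemma dist_last {G : SimpleGraph V} [DecidableRel G.Adj] (hconn : G.Connected) {n : ℕ}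
    {p : Fin (n+1) → V} (hp : ok G n p) (a : ℕ) (ha : a ≤ n) :
    G.dist (seqv p n) (seqv p a) = n - a := by
  have h1 := chain_le hconn hp.1 a n ha le_rfl
  have h2 := hp.2 a (by omega)
  have h3 := hp.2 n (by omega)
  have ht := hconn.dist_triangle (u := seqv p 0) (v := seqv p a) (w := seqv p n)
  have hcomm : G.dist (seqv p n) (seqv p a) = G.dist (seqv p a) (seqv p n) :=
    SimpleGraph.dist_comm
  omega

lemma seqv_rev {n : ℕ} (p : Fin (n+1) → V) (j : ℕ) (hj : j ≤ n) :
    seqv (p ∘ Fin.rev) j = seqv p (n - j) := by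
  unfold seqv
  simp only [Function.comp_apply]
  congr 1
  ext
  simp [Fin.rev]
  omega

lemma ok_rev {G : SimpleGraph V} [DecidableRel G.Adj] (hconn : G.Connected) {n : ℕ}
    {p : Fin (n+1) → V} (hp : ok G n p) : ok G n (p ∘ Fin.rev) := by
  constructor
  · intro j hj
    rw [seqv_rev p j (by omega), seqv_rev p (j+1) (by omega)]
    have h := hp.1 (n - j - 1) (by omega)
    rw [show n - j - 1 + 1 = n - j from by omega] at h
    rw [show n - (j+1) = n - j - 1 from by omega]
    exact h.symm
  · intro j hj
    rw [seqv_rev p 0 (by omega), seqv_rev p j (by omega), Nat.sub_zero]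
    have := dist_last hconn hp (n - j) (by omega)
    rw [this]
    omega

lemma parity_seq {G : SimpleGraph V} [DecidableRel G.Adj] {σ : V → Fin 2}
    (hbip : ∀ x y : V, G.Adj x y → σ x ≠ σ y) {n : ℕ} {p : Fin (n+1) → V}
    (hp : ok G n p) : ∀ j : ℕ, j ≤ n → (σ (seqv p j) = σ (seqv p 0) ↔ Even j) := by
  intro j
  induction j with
  | zero => intro _; simp
  | succ j ih =>
    intro hj
    have hne : σ (seqv p (j+1)) ≠ σ (seqv p j) := (hbip _ _ (hp.1 j (by omega))).symm
    have ihj := ih (by omega)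
    rw [Nat.even_add_one]
    constructor
    · intro h hEv
      exact hne (h.trans (ihj.mpr hEv).symm)
    · intro hOdd
      exact fin2_trans hne (fun hEq => hOdd (ihj.mp hEq))

lemma exists_ok {G : SimpleGraph V} [DecidableRel G.Adj] (hconn : G.Connected)
    {x y : V} {n : ℕ} (h : G.dist x y = n) :
    ∃ p : Fin (n+1) → V, ok G n p ∧ seqv p 0 = x ∧ seqv p n = y := by
  obtain ⟨w, hw⟩ := (hconn.preconnected x y).exists_walk_length_eq_dist
  rw [h] at hw
  refine ⟨fun j => w.getVert j.val, ?_⟩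
  set p : Fin (n+1) → V := fun j => w.getVert j.val with hpdef
  have hs : ∀ j : ℕ, j ≤ n → seqv p j = w.getVert j := by
    intro j hj
    unfold seqv
    simp [hpdef, min_eq_left hj]
  have hadj : ∀ j : ℕ, j < n → G.Adj (seqv p j) (seqv p (j+1)) := by
    intro j hj
    rw [hs j (by omega), hs (j+1) (by omega)]
    exact w.adj_getVert_succ (by omega)
  have h0 : seqv p 0 = x := by rw [hs 0 (by omega), Walk.getVert_zero]
  have hn : seqv p n = y := by
    rw [hs n (by omega), ← hw, Walk.getVert_length]
  refine ⟨⟨hadj, ?_⟩, h0, hn⟩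
  intro j hj
  have h1 := chain_le hconn hadj 0 j (by omega) (by omega)
  have h2 := chain_le hconn hadj j n (by omega) le_rfl
  have ht := hconn.dist_triangle (u := seqv p 0) (v := seqv p j) (w := seqv p n)
  rw [h0] at h1 ht ⊢
  rw [hn] at h2 ht
  omega

lemma seqv_init {n : ℕ} (q : Fin (n+2) → V) (j : ℕ) (hj : j ≤ n) :
    seqv (Fin.init q) j = seqv q j := by
  unfold seqv Fin.init
  congr 1
  ext
  simp
  omega

lemma seqv_snoc_le {n : ℕ} (p : Fin (n+1) → V) (w : V) (j : ℕ) (hj : j ≤ n) :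
    seqv (Fin.snoc p w) j = seqv p j := by
  have e : (⟨min j (n+1), by omega⟩ : Fin (n+2)) = Fin.castSucc ⟨min j n, by omega⟩ := by
    ext; simp; omega
  unfold seqv
  rw [e, Fin.snoc_castSucc]

lemma seqv_snoc_last {n : ℕ} (p : Fin (n+1) → V) (w : V) :
    seqv (Fin.snoc p w) (n+1) = w := by
  have e : (⟨min (n+1) (n+1), by omega⟩ : Fin (n+2)) = Fin.last (n+1) := by
    ext; simp
  unfold seqv
  rw [e, Fin.snoc_last]

lemma seqv_last' {n : ℕ} (q : Fin (n+1) → V) : seqv q n = q (Fin.last n) := by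
  unfold seqv
  congr 1
  ext
  simp

lemma GS_zero (G : SimpleGraph V) [DecidableRel G.Adj] (x : V) :
    GS G 0 x = {fun _ => x} := by
  ext p
  rw [mem_GS, mem_singleton]
  constructor
  · rintro ⟨hok, h0⟩
    funext i
    have hi : i = ⟨0, by omega⟩ := by
      have := i.isLt; ext; omega
    rw [hi, seqv_mk p 0 (by omega), h0]
  · rintro rfl
    refine ⟨⟨?_, ?_⟩, rfl⟩
    · intro j hj; omega
    · intro j hj
      have : j = 0 := by omega
      subst this
      simp [SimpleGraph.dist_self]

lemma card_GS (G : SimpleGraph V) [DecidableRel G.Adj] (σ : V → Fin 2) (b : Fin 2 → ℕ → ℕ)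
    (hb : ∀ (x y : V) (i : ℕ), G.dist x y = i →
      (Finset.univ.filter (fun z => G.dist x z = i + 1 ∧ G.Adj y z)).card = b (σ x) i) :
    ∀ (n : ℕ) (x : V), (GS G n x).card = ∏ j ∈ range n, b (σ x) j := by
  intro n
  induction n with
  | zero => intro x; rw [GS_zero, card_singleton, prod_range_zero]
  | succ n ih =>
    intro x
    have H : ∀ q ∈ GS G (n+1) x, Fin.init q ∈ GS G n x := by
      intro q hq
      rw [mem_GS] at hq ⊢
      obtain ⟨⟨ha, hd⟩, h0⟩ := hq
      refine ⟨⟨?_, ?_⟩, ?_⟩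
      · intro j hj
        rw [seqv_init q j (by omega), seqv_init q (j+1) (by omega)]
        exact ha j (by omega)
      · intro j hj
        rw [seqv_init q 0 (by omega), seqv_init q j (by omega)]
        exact hd j (by omega)
      · rw [seqv_init q 0 (by omega)]; exact h0
    rw [card_eq_sum_card_fiberwise H]
    have hfib : ∀ p ∈ GS G n x,
        ((GS G (n+1) x).filter (fun q => Fin.init q = p)).card = b (σ x) n := by
      intro p hp
      rw [mem_GS] at hp
      obtain ⟨⟨ha, hd⟩, h0⟩ := hp
      have hdist : G.dist x (seqv p n) = n := by rw [← h0]; exact hd n (by omega)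
      rw [← hb x (seqv p n) n hdist]
      refine card_bij' (fun q _ => seqv q (n+1)) (fun w _ => Fin.snoc p w)
        ?hi ?hj ?left ?right
      case hi =>
        intro q hq
        rw [mem_filter] at hq
        obtain ⟨hq1, hq2⟩ := hq
        rw [mem_GS] at hq1
        obtain ⟨⟨ha', hd'⟩, h0'⟩ := hq1
        rw [mem_filter]
        refine ⟨mem_univ _, ?_, ?_⟩
        · rw [← h0']; exact hd' (n+1) (by omega)
        · have hadj := ha' n (by omega)
          have hpn : seqv p n = seqv q n := by rw [← hq2, seqv_init q n (by omega)]
          rw [hpn]; exact hadj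
      case hj =>
        intro w hw
        rw [mem_filter] at hw
        obtain ⟨-, hw1, hw2⟩ := hw
        rw [mem_filter, mem_GS]
        refine ⟨⟨⟨?_, ?_⟩, ?_⟩, ?_⟩
        · intro j hj
          by_cases hjn : j < n
          · rw [seqv_snoc_le p w j (by omega), seqv_snoc_le p w (j+1) (by omega)]
            exact ha j hjn
          · have : j = n := by omega
            subst this
            rw [seqv_snoc_le p w j le_rfl, seqv_snoc_last]
            exact hw2
        · intro j hj
          rw [seqv_snoc_le p w 0 (by omega)]
          by_cases hjn : j ≤ n
          · rw [seqv_snoc_le p w j hjn]; exact hd j (by omega)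
          · have : j = n + 1 := by omega
            subst this
            rw [seqv_snoc_last, h0]
            exact hw1
        · rw [seqv_snoc_le p w 0 (by omega)]; exact h0
        · rw [Fin.init_snoc]
      case left =>
        intro q hq
        rw [mem_filter] at hq
        rw [seqv_last', ← hq.2]
        exact Fin.snoc_init_self q
      case right =>
        intro w hw
        rw [seqv_snoc_last]
    rw [sum_congr rfl hfib, sum_const, smul_eq_mul, ih x, prod_range_succ]

lemma card_GP (G : SimpleGraph V) [DecidableRel G.Adj] (hconn : G.Connected)
    (σ : V → Fin 2) (c : Fin 2 → ℕ → ℕ)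
    (hc : ∀ (x y : V) (i : ℕ), G.dist x y = i →
      (Finset.univ.filter (fun z => G.dist x z = i - 1 ∧ G.Adj y z)).card = c (σ x) i) :
    ∀ (n : ℕ) (x y : V), G.dist x y = n →
      (GP G n x y).card = ∏ j ∈ range n, c (σ x) (j+1) := by
  intro n
  induction n with
  | zero =>
    intro x y h
    have hxy : x = y := (hconn.dist_eq_zero_iff).mp h
    subst hxy
    have h1 : GP G 0 x x = (GS G 0 x).filter (fun p => seqv p 0 = x) := rfl
    have hcond : seqv (fun _ : Fin 1 => x) 0 = x := rfl
    rw [h1, GS_zero, filter_singleton, if_pos hcond, card_singleton, prod_range_zero]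
  | succ n ih =>
    intro x y h
    set A := univ.filter (fun z => G.dist x z = n ∧ G.Adj y z) with hA
    have H : ∀ q ∈ GP G (n+1) x y, seqv q n ∈ A := by
      intro q hq
      rw [mem_GP] at hq
      obtain ⟨⟨⟨ha', hd'⟩, h0'⟩, hend⟩ := hq
      rw [hA, mem_filter]
      refine ⟨mem_univ _, ?_, ?_⟩
      · rw [← h0']; exact hd' n (by omega)
      · have := ha' n (by omega)
        rw [hend] at this
        exact this.symm
    rw [card_eq_sum_card_fiberwise H]
    have hfib : ∀ z ∈ A,
        ((GP G (n+1) x y).filter (fun q => seqv q n = z)).card = (GP G n x z).card := by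
      intro z hz
      rw [hA, mem_filter] at hz
      obtain ⟨-, hz1, hz2⟩ := hz
      refine card_bij' (fun q _ => Fin.init q) (fun p _ => Fin.snoc p y)
        ?hi ?hj ?left ?right
      case hi =>
        intro q hq
        rw [mem_filter, mem_GP] at hq
        obtain ⟨⟨⟨⟨ha', hd'⟩, h0'⟩, hend⟩, hqn⟩ := hq
        rw [mem_GP]
        refine ⟨⟨⟨?_, ?_⟩, ?_⟩, ?_⟩
        · intro j hj
          rw [seqv_init q j (by omega), seqv_init q (j+1) (by omega)]
          exact ha' j (by omega)
        · intro j hj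
          rw [seqv_init q 0 (by omega), seqv_init q j (by omega)]
          exact hd' j (by omega)
        · rw [seqv_init q 0 (by omega)]; exact h0'
        · rw [seqv_init q n (by omega)]; exact hqn
      case hj =>
        intro p hp
        rw [mem_GP] at hp
        obtain ⟨⟨⟨ha', hd'⟩, h0'⟩, hend'⟩ := hp
        rw [mem_filter, mem_GP]
        refine ⟨⟨⟨⟨?_, ?_⟩, ?_⟩, ?_⟩, ?_⟩
        · intro j hj
          by_cases hjn : j < n
          · rw [seqv_snoc_le p y j (by omega), seqv_snoc_le p y (j+1) (by omega)]
            exact ha' j hjn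
          · have : j = n := by omega
            subst this
            rw [seqv_snoc_le p y j le_rfl, seqv_snoc_last, hend']
            exact hz2.symm
        · intro j hj
          rw [seqv_snoc_le p y 0 (by omega)]
          by_cases hjn : j ≤ n
          · rw [seqv_snoc_le p y j hjn]; exact hd' j (by omega)
          · have : j = n + 1 := by omega
            subst this
            rw [seqv_snoc_last, h0']
            exact h
        · rw [seqv_snoc_le p y 0 (by omega)]; exact h0'
        · rw [seqv_snoc_last]
        · rw [seqv_snoc_le p y n le_rfl]; exact hend'
      case left =>
        intro q hq
        rw [mem_filter, mem_GP] at hq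
        have hql : q (Fin.last (n+1)) = y := (seqv_last' q).symm.trans hq.1.2
        rw [← hql]
        exact Fin.snoc_init_self q
      case right =>
        intro p hp
        funext i
        simp [Fin.init]
    have hAcard : A.card = c (σ x) (n+1) := by
      have hcc := hc x y (n+1) h
      simp only [Nat.add_sub_cancel] at hcc
      rw [hA]
      exact hcc
    calc ∑ z ∈ A, ((GP G (n+1) x y).filter (fun q => seqv q n = z)).card
        = ∑ z ∈ A, (GP G n x z).card := sum_congr rfl hfib
      _ = ∑ z ∈ A, ∏ j ∈ range n, c (σ x) (j+1) := by
          apply sum_congr rfl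
          intro z hz
          rw [hA, mem_filter] at hz
          exact ih x z hz.2.1
      _ = A.card * ∏ j ∈ range n, c (σ x) (j+1) := by rw [sum_const, smul_eq_mul]
      _ = ∏ j ∈ range (n+1), c (σ x) (j+1) := by
          rw [hAcard, prod_range_succ, Nat.mul_comm]


lemma card_GP_rev (G : SimpleGraph V) [DecidableRel G.Adj] (hconn : G.Connected)
    {n : ℕ} {x y : V} (h : G.dist x y = n) :
    (GP G n x y).card = (GP G n y x).card := by
  refine card_bij' (fun p _ => p ∘ Fin.rev) (fun p _ => p ∘ Fin.rev) ?hi ?hj ?left ?right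
  case hi =>
    intro p hp
    rw [mem_GP] at hp ⊢
    obtain ⟨⟨hok, h0⟩, hn⟩ := hp
    refine ⟨⟨ok_rev hconn hok, ?_⟩, ?_⟩
    · rw [seqv_rev p 0 (by omega), Nat.sub_zero]; exact hn
    · rw [seqv_rev p n le_rfl, Nat.sub_self]; exact h0
  case hj =>
    intro p hp
    rw [mem_GP] at hp ⊢
    obtain ⟨⟨hok, h0⟩, hn⟩ := hp
    refine ⟨⟨ok_rev hconn hok, ?_⟩, ?_⟩
    · rw [seqv_rev p 0 (by omega), Nat.sub_zero]; exact hn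
    · rw [seqv_rev p n le_rfl, Nat.sub_self]; exact h0
  case left =>
    intro p _
    funext i
    simp [Function.comp, Fin.rev_rev]
  case right =>
    intro p _
    funext i
    simp [Function.comp, Fin.rev_rev]

noncomputable def allGs (G : SimpleGraph V) [DecidableRel G.Adj] (σ : V → Fin 2)
    (n : ℕ) (ℓ : Fin 2) : Finset (Fin (n+1) → V) :=
  (allG G n).filter (fun p => σ (seqv p 0) = ℓ)

lemma mem_allGs {G : SimpleGraph V} [DecidableRel G.Adj] {σ : V → Fin 2}
    {n : ℕ} {ℓ : Fin 2} {p : Fin (n+1) → V} :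
    p ∈ allGs G σ n ℓ ↔ ok G n p ∧ σ (seqv p 0) = ℓ := by
  simp [allGs, allG]

lemma card_allGs (G : SimpleGraph V) [DecidableRel G.Adj]
    (σ : V → Fin 2) (b : Fin 2 → ℕ → ℕ)
    (hb : ∀ (x y : V) (i : ℕ), G.dist x y = i →
      (Finset.univ.filter (fun z => G.dist x z = i + 1 ∧ G.Adj y z)).card = b (σ x) i)
    (n : ℕ) (ℓ : Fin 2) :
    (allGs G σ n ℓ).card
      = (univ.filter (fun x => σ x = ℓ)).card * ∏ j ∈ range n, b ℓ j := by
  have H : ∀ p ∈ allGs G σ n ℓ, seqv p 0 ∈ univ.filter (fun x => σ x = ℓ) := by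
    intro p hp
    rw [mem_allGs] at hp
    rw [mem_filter]
    exact ⟨mem_univ _, hp.2⟩
  rw [card_eq_sum_card_fiberwise H]
  have hfib : ∀ x ∈ univ.filter (fun x => σ x = ℓ),
      ((allGs G σ n ℓ).filter (fun p => seqv p 0 = x)).card = ∏ j ∈ range n, b ℓ j := by
    intro x hx
    rw [mem_filter] at hx
    have hσx : σ x = ℓ := hx.2
    have heq : (allGs G σ n ℓ).filter (fun p => seqv p 0 = x) = GS G n x := by
      ext p
      rw [mem_filter, mem_allGs, mem_GS]
      constructor
      · rintro ⟨⟨h1, _⟩, h3⟩; exact ⟨h1, h3⟩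
      · rintro ⟨h1, h3⟩; exact ⟨⟨h1, by rw [h3, hσx]⟩, h3⟩
    rw [heq, card_GS G σ b hb n x, hσx]
  rw [sum_congr rfl hfib, sum_const, smul_eq_mul]

lemma card_allGs_rev (G : SimpleGraph V) [DecidableRel G.Adj] (hconn : G.Connected)
    (σ : V → Fin 2) (hbip : ∀ x y : V, G.Adj x y → σ x ≠ σ y)
    {n : ℕ} (hodd : ¬ Even n) :
    (allGs G σ n 0).card = (allGs G σ n 1).card := by
  refine card_bij' (fun p _ => p ∘ Fin.rev) (fun p _ => p ∘ Fin.rev) ?hi ?hj ?left ?right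
  case hi =>
    intro p hp
    rw [mem_allGs] at hp ⊢
    obtain ⟨hok, hσ⟩ := hp
    refine ⟨ok_rev hconn hok, ?_⟩
    rw [seqv_rev p 0 (by omega), Nat.sub_zero]
    have hpar := parity_seq hbip hok n le_rfl
    have hne : σ (seqv p n) ≠ σ (seqv p 0) := fun hEq => hodd (hpar.mp hEq)
    rw [hσ] at hne
    exact fin2_ne (show (0 : Fin 2) ≠ 1 by decide) _ hne
  case hj =>
    intro p hp
    rw [mem_allGs] at hp ⊢
    obtain ⟨hok, hσ⟩ := hp
    refine ⟨ok_rev hconn hok, ?_⟩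
    rw [seqv_rev p 0 (by omega), Nat.sub_zero]
    have hpar := parity_seq hbip hok n le_rfl
    have hne : σ (seqv p n) ≠ σ (seqv p 0) := fun hEq => hodd (hpar.mp hEq)
    rw [hσ] at hne
    exact fin2_ne (show (1 : Fin 2) ≠ 0 by decide) _ hne
  case left =>
    intro p _
    funext i
    simp [Function.comp, Fin.rev_rev]
  case right =>
    intro p _
    funext i
    simp [Function.comp, Fin.rev_rev]

end DBR

theorem stmt3 {V : Type} [Fintype V] [DecidableEq V]
    (G : SimpleGraph V) [DecidableRel G.Adj]
    (hconn : G.Connected) (hcard : 2 ≤ Fintype.card V)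
    (σ : V → Fin 2)
    (hbip : ∀ x y : V, G.Adj x y → σ x ≠ σ y)
    (k : Fin 2 → ℕ)
    (hdeg : ∀ x : V, G.degree x = k (σ x))
    (c b : Fin 2 → ℕ → ℕ)
    (hc : ∀ (x y : V) (i : ℕ), G.dist x y = i →
      (Finset.univ.filter (fun z => G.dist x z = i - 1 ∧ G.Adj y z)).card = c (σ x) i)
    (hb : ∀ (x y : V) (i : ℕ), G.dist x y = i →
      (Finset.univ.filter (fun z => G.dist x z = i + 1 ∧ G.Adj y z)).card = b (σ x) i)
    (D : Fin 2 → ℕ)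
    (hDub : ∀ x y : V, G.dist x y ≤ D (σ x))
    (hDmax : ∀ ℓ : Fin 2, ∃ x y : V, σ x = ℓ ∧ G.dist x y = D ℓ)
    (hD0 : 1 ≤ D 0) (hD01 : D 0 ≤ D 1) :
    ∀ i : ℕ, 1 ≤ i → i ≤ (D 0 - 1) / 2 →
      c 0 (2 * i) * c 0 (2 * i + 1) = c 1 (2 * i) * c 1 (2 * i + 1) ∧
      b 0 (2 * i - 1) * b 0 (2 * i) = b 1 (2 * i - 1) * b 1 (2 * i) := by
  intro i hi1 hi2
  obtain ⟨x0, y0, hσx0, hdx0⟩ := hDmax 0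
  have hm2le : 2 * i + 1 ≤ D 0 := by omega
  obtain ⟨m, hm⟩ : ∃ m, 2 * i = m + 1 := ⟨2 * i - 1, by omega⟩
  have hmodd : ¬ Even m := by rintro ⟨r, hr⟩; omega
  have hm2odd : ¬ Even (m + 2) := by rintro ⟨r, hr⟩; omega
  have hm2D : m + 2 ≤ D 0 := by omega
  obtain ⟨p, hok, hp0, hpn⟩ := exists_ok hconn hdx0
  have hdistj : ∀ j : ℕ, j ≤ D 0 → G.dist x0 (seqv p j) = j := by
    intro j hj
    rw [← hp0]
    exact hok.2 j (by omega)
  have hσp : ∀ j : ℕ, j ≤ D 0 → ¬ Even j → σ (seqv p j) = 1 := by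
    intro j hj hoddj
    have hpar := parity_seq hbip hok j hj
    have hne : σ (seqv p j) ≠ σ (seqv p 0) := fun hEq => hoddj (hpar.mp hEq)
    rw [hp0, hσx0] at hne
    exact fin2_ne (show (0 : Fin 2) ≠ 1 by decide) _ hne
  have hcpos : ∀ jj : ℕ, 1 ≤ jj → jj ≤ D 0 → 0 < c 0 jj := by
    intro jj h1 h2
    have hd := hdistj jj h2
    have hcc := hc x0 (seqv p jj) jj hd
    rw [hσx0] at hcc
    rw [← hcc]
    apply card_pos.mpr
    refine ⟨seqv p (jj - 1), ?_⟩
    rw [mem_filter]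
    refine ⟨mem_univ _, ?_, ?_⟩
    · exact hdistj (jj - 1) (by omega)
    · have hadj := hok.1 (jj - 1) (by omega)
      rw [show jj - 1 + 1 = jj from by omega] at hadj
      exact hadj.symm
  have hbpos : ∀ jj : ℕ, jj < D 0 → 0 < b 0 jj := by
    intro jj h2
    have hd := hdistj jj (by omega)
    have hbb := hb x0 (seqv p jj) jj hd
    rw [hσx0] at hbb
    rw [← hbb]
    apply card_pos.mpr
    refine ⟨seqv p (jj + 1), ?_⟩
    rw [mem_filter]
    exact ⟨mem_univ _, hdistj (jj + 1) (by omega), hok.1 jj (by omega)⟩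
  -- the c identity
  have hceq : ∀ d : ℕ, d ≤ D 0 → ¬ Even d →
      ∏ j ∈ range d, c 0 (j + 1) = ∏ j ∈ range d, c 1 (j + 1) := by
    intro d hdD hdo
    have hdv : G.dist x0 (seqv p d) = d := hdistj d hdD
    have h1 := card_GP G hconn σ c hc d x0 (seqv p d) hdv
    rw [hσx0] at h1
    have h2 := card_GP_rev G hconn hdv
    have hdv' : G.dist (seqv p d) x0 = d := by rw [SimpleGraph.dist_comm]; exact hdv
    have h3 := card_GP G hconn σ c hc d (seqv p d) x0 hdv'
    rw [hσp d hdD hdo] at h3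
    rw [← h1, h2, h3]
  have hc1 := hceq (m + 2) hm2D hm2odd
  have hc2 := hceq m (by omega) hmodd
  rw [show m + 2 = m + 1 + 1 from rfl] at hc1
  rw [prod_range_succ, prod_range_succ, prod_range_succ, prod_range_succ] at hc1
  rw [hc2] at hc1
  have hApos1 : 0 < ∏ j ∈ range m, c 1 (j + 1) := by
    rw [← hc2]
    apply Finset.prod_pos
    intro j hj
    rw [mem_range] at hj
    exact hcpos (j + 1) (by omega) (by omega)
  rw [mul_assoc, mul_assoc] at hc1
  have hkey_c : c 0 (m + 1) * c 0 (m + 1 + 1) = c 1 (m + 1) * c 1 (m + 1 + 1) :=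
    Nat.eq_of_mul_eq_mul_left hApos1 hc1
  -- the b identity
  have hbeq : ∀ d : ℕ, ¬ Even d →
      (univ.filter (fun x => σ x = (0 : Fin 2))).card * ∏ j ∈ range d, b 0 j
        = (univ.filter (fun x => σ x = (1 : Fin 2))).card * ∏ j ∈ range d, b 1 j := by
    intro d ho
    have h1 := card_allGs G σ b hb d 0
    have h2 := card_allGs G σ b hb d 1
    have h3 := card_allGs_rev G hconn σ hbip (n := d) ho
    rw [h1, h2] at h3
    exact h3
  have hb1 := hbeq (m + 2) hm2odd
  have hb2 := hbeq m hmodd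
  rw [show m + 2 = m + 1 + 1 from rfl] at hb1
  rw [prod_range_succ, prod_range_succ, prod_range_succ, prod_range_succ] at hb1
  have e1 : ((univ.filter (fun x => σ x = (0 : Fin 2))).card * ∏ j ∈ range m, b 0 j)
        * (b 0 m * b 0 (m + 1))
      = ((univ.filter (fun x => σ x = (1 : Fin 2))).card * ∏ j ∈ range m, b 1 j)
        * (b 1 m * b 1 (m + 1)) := by
    calc ((univ.filter (fun x => σ x = (0 : Fin 2))).card * ∏ j ∈ range m, b 0 j)
          * (b 0 m * b 0 (m + 1))
        = (univ.filter (fun x => σ x = (0 : Fin 2))).card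
            * ((∏ j ∈ range m, b 0 j) * b 0 m * b 0 (m + 1)) := by ring
      _ = (univ.filter (fun x => σ x = (1 : Fin 2))).card
            * ((∏ j ∈ range m, b 1 j) * b 1 m * b 1 (m + 1)) := hb1
      _ = ((univ.filter (fun x => σ x = (1 : Fin 2))).card * ∏ j ∈ range m, b 1 j)
            * (b 1 m * b 1 (m + 1)) := by ring
  rw [← hb2] at e1
  have hBpos : 0 < (univ.filter (fun x => σ x = (0 : Fin 2))).card * ∏ j ∈ range m, b 0 j := by
    apply Nat.mul_pos
    · exact card_pos.mpr ⟨x0, mem_filter.mpr ⟨mem_univ _, hσx0⟩⟩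
    · apply Finset.prod_pos
      intro j hj
      rw [mem_range] at hj
      exact hbpos j (by omega)
  have hkey_b : b 0 m * b 0 (m + 1) = b 1 m * b 1 (m + 1) :=
    Nat.eq_of_mul_eq_mul_left hBpos e1
  constructor
  · rw [hm]
    exact hkey_c
  · rw [hm]
    simp only [Nat.add_sub_cancel]
    exact hkey_b
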